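/- Let f_{2k,α}(y) = (α/2)(1−2y) + (1−α)·Σ_{r=k+1}^{2k} C(2k,r)·(y^r(1−y)^{2k−r+1} − (1−y)^r y^{2k−r+1}). Then the derivative satisfies f'_{2k,α}(y) = −1 + (1−α)(2k+1)·C(2k,k)·y^k(1−y)^k for all y ∈ ℝ, where C(m,r) denotes the binomial coefficient. -/

import Mathlib

open Finset

/-- The limiting drift function of the `2k`-choices dynamics with node failures
on the complete graph, with failure probability `α`. -/
noncomputable def f2k (k : ℕ) (α y : ℝ) : ℝ :=
  (α/2) * (1-2*y) + (1-α) * ∑ r ∈ Finset.Icc (k+1) (2*k),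
    (Nat.choose (2*k) r : ℝ) * (y^r * (1-y)^(2*k-r+1) - (1-y)^r * y^(2*k-r+1))

/-- Derivative of a single summand. -/
lemma term_deriv (k i : ℕ) (hik : i < k) (c : ℝ) (y : ℝ) :
    HasDerivAt (fun y : ℝ => c * (y^(k+1+i)*(1-y)^(k-i) - (1-y)^(k+1+i)*y^(k-i)))
      (c * ((((k:ℝ)+1+i)*y^(k+i)*(1-y)^(k-i) - ((k:ℝ)-i)*y^(k+1+i)*(1-y)^(k-(i+1)))
          + (((k:ℝ)+1+i)*(1-y)^(k+i)*y^(k-i) - ((k:ℝ)-i)*(1-y)^(k+1+i)*y^(k-(i+1))))) y := by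
  have hu : HasDerivAt (fun y : ℝ => 1 - y) (-1) y := by
    simpa using (hasDerivAt_id y).const_sub 1
  have hA : HasDerivAt (fun y : ℝ => y^(k+1+i)) (((k+1+i : ℕ) : ℝ)*y^(k+i)) y := by
    simpa using hasDerivAt_pow (k+1+i) y
  have hB : HasDerivAt (fun y : ℝ => (1-y)^(k-i))
      ((((k-i : ℕ) : ℝ)*(1-y)^(k-i-1)) * (-1)) y :=
    (hasDerivAt_pow (k-i) (1-y)).comp y hu
  have hC : HasDerivAt (fun y : ℝ => (1-y)^(k+1+i))
      ((((k+1+i : ℕ) : ℝ)*(1-y)^(k+1+i-1)) * (-1)) y :=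
    (hasDerivAt_pow (k+1+i) (1-y)).comp y hu
  have hD : HasDerivAt (fun y : ℝ => y^(k-i)) (((k-i : ℕ) : ℝ)*y^(k-i-1)) y :=
    hasDerivAt_pow (k-i) y
  have h := ((hA.mul hB).sub (hC.mul hD)).const_mul c
  refine h.congr_deriv ?_
  have e1 : k+1+i-1 = k+i := by omega
  have e2 : k-i-1 = k-(i+1) := by omega
  have e3 : ((k-i : ℕ) : ℝ) = (k:ℝ) - i := by
    have h' : i ≤ k := le_of_lt hik
    push_cast [h']; ring
  rw [e1, e2, e3]
  push_cast
  ring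

/-- The key algebraic identity: the sum of the term-derivatives. -/
lemma sum_deriv_id (k : ℕ) (hk : 1 ≤ k) (y : ℝ) :
    ∑ i ∈ Finset.range k, ((Nat.choose (2*k) (k+1+i) : ℝ) *
      ((((k:ℝ)+1+i)*y^(k+i)*(1-y)^(k-i) - ((k:ℝ)-i)*y^(k+1+i)*(1-y)^(k-(i+1)))
        + (((k:ℝ)+1+i)*(1-y)^(k+i)*y^(k-i) - ((k:ℝ)-i)*(1-y)^(k+1+i)*y^(k-(i+1)))))
    = -1 + (2*(k:ℝ)+1) * (Nat.choose (2*k) k : ℝ) * y^k * (1-y)^k := by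
  set g : ℕ → ℝ := fun a => (Nat.choose (2*k) a : ℝ) * y^a * (1-y)^(2*k-a) with hg
  set u : ℕ → ℝ := fun i => ((k:ℝ)-i) * (Nat.choose (2*k) (k+i) : ℝ) *
      (y^(k+i)*(1-y)^(k-i) + (1-y)^(k+i)*y^(k-i)) with hu
  -- per-term decomposition
  have hterm : ∀ i ∈ Finset.range k,
      (Nat.choose (2*k) (k+1+i) : ℝ) *
      ((((k:ℝ)+1+i)*y^(k+i)*(1-y)^(k-i) - ((k:ℝ)-i)*y^(k+1+i)*(1-y)^(k-(i+1)))
        + (((k:ℝ)+1+i)*(1-y)^(k+i)*y^(k-i) - ((k:ℝ)-i)*(1-y)^(k+1+i)*y^(k-(i+1))))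
      = (u i - u (i+1)) - g (k+1+i) - g (k-(i+1)) := by
    intro i hi
    rw [Finset.mem_range] at hi
    have hchoose : ((Nat.choose (2*k) (k+1+i) : ℝ)) * ((k:ℝ)+1+i)
        = (Nat.choose (2*k) (k+i) : ℝ) * ((k:ℝ)-i) := by
      have h0 := Nat.choose_succ_right_eq (2*k) (k+i)
      have h2 : 2*k - (k+i) = k - i := by omega
      rw [h2] at h0
      have h1 := congrArg (fun n : ℕ => (n : ℝ)) h0
      push_cast at h1
      have e3 : ((k-i : ℕ) : ℝ) = (k:ℝ) - i := by
        have h' : i ≤ k := le_of_lt hi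
        push_cast [h']; ring
      rw [e3] at h1
      have e5 : k+i+1 = k+1+i := by omega
      rw [e5] at h1
      push_cast at h1 ⊢
      linarith [h1]
    have hsymm : Nat.choose (2*k) (k-(i+1)) = Nat.choose (2*k) (k+1+i) := by
      have h1 : k+1+i ≤ 2*k := by omega
      have h2 := Nat.choose_symm h1
      have h3 : 2*k - (k+1+i) = k-(i+1) := by omega
      rw [h3] at h2
      exact h2
    simp only [hg, hu, hsymm]
    have ea : 2*k - (k+1+i) = k-(i+1) := by omega
    have eb : 2*k - (k-(i+1)) = k+1+i := by omega
    have ec : k+(i+1) = k+1+i := by omega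
    have ed : k-i = (k-(i+1))+1 := by omega
    rw [ea, eb, ec, ed]
    push_cast
    linear_combination (y^(k+i)*(1-y)^((k-(i+1))+1) + (1-y)^(k+i)*y^((k-(i+1))+1)) * hchoose
  rw [Finset.sum_congr rfl hterm]
  rw [Finset.sum_sub_distrib, Finset.sum_sub_distrib, Finset.sum_range_sub' u k]
  have hu0 : u 0 = (k:ℝ) * (Nat.choose (2*k) k : ℝ) * (y^k*(1-y)^k + (1-y)^k*y^k) := by
    simp [hu]
  have huk : u k = 0 := by simp [hu]
  -- reflect the last sum
  have hrefl : ∑ i ∈ Finset.range k, g (k-(i+1)) = ∑ a ∈ Finset.range k, g a := by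
    rw [← Finset.sum_range_reflect g k]
    refine Finset.sum_congr rfl fun i hi => ?_
    congr 1
    omega
  -- binomial theorem
  have hbin : ∑ a ∈ Finset.range (2*k+1), g a = 1 := by
    have h := add_pow y (1-y) (2*k)
    have hy : y + (1-y) = 1 := by ring
    rw [hy, one_pow] at h
    rw [h]
    refine Finset.sum_congr rfl fun a ha => ?_
    simp only [hg]; ring
  have hsplit : ∑ a ∈ Finset.range (2*k+1), g a
      = (∑ a ∈ Finset.range k, g a + g k) + ∑ i ∈ Finset.range k, g (k+1+i) := by
    have h1 : 2*k+1 = (k+1)+k := by omega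
    rw [h1, Finset.sum_range_add, Finset.sum_range_succ]
  have hgk : g k = (Nat.choose (2*k) k : ℝ) * y^k * (1-y)^k := by
    have : 2*k - k = k := by omega
    simp [hg, this]
  rw [hrefl, hu0, huk]
  have hsum : ∑ i ∈ Finset.range k, g (k+1+i) + ∑ a ∈ Finset.range k, g a
      = 1 - g k := by
    rw [← hbin, hsplit]; ring
  rw [hgk] at hsum
  have hkk : (k:ℝ) ≥ 1 := by exact_mod_cast hk
  nlinarith [hsum]

/-- **Derivative of the `2k`-choices drift function.**
`f'_{2k,α}(y) = −1 + (1−α)(2k+1) C(2k,k) yᵏ(1−y)ᵏ`. -/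
theorem stmt_18 (k : ℕ) (hk : 1 ≤ k) (α : ℝ) (hα : α ∈ Set.Ioo (0:ℝ) 1) (y : ℝ) :
    HasDerivAt (f2k k α)
      (-1 + (1-α) * (2*k+1) * (Nat.choose (2*k) k : ℝ) * y^k * (1-y)^k) y := by
  have hfun : f2k k α = fun y : ℝ => (α/2) * (1-2*y) + (1-α) *
      ∑ i ∈ Finset.range k, (Nat.choose (2*k) (k+1+i) : ℝ) *
        (y^(k+1+i)*(1-y)^(k-i) - (1-y)^(k+1+i)*y^(k-i)) := by
    funext z
    unfold f2k
    congr 1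
    congr 1
    rw [← Finset.Ico_add_one_right_eq_Icc, Finset.sum_Ico_eq_sum_range]
    have hn : 2*k+1-(k+1) = k := by omega
    rw [hn]
    refine Finset.sum_congr rfl fun i hi => ?_
    rw [Finset.mem_range] at hi
    have e2 : 2*k-(k+1+i)+1 = k-i := by omega
    rw [e2]
  rw [hfun]
  have h1 : HasDerivAt (fun y : ℝ => (α/2)*(1-2*y)) ((α/2) * (-2)) y := by
    have h0 : HasDerivAt (fun y : ℝ => 1-2*y) (-2) y := by
      simpa using ((hasDerivAt_id y).const_mul 2).const_sub 1
    exact h0.const_mul (α/2)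
  have h2 : HasDerivAt (fun y : ℝ => ∑ i ∈ Finset.range k,
      (Nat.choose (2*k) (k+1+i) : ℝ) * (y^(k+1+i)*(1-y)^(k-i) - (1-y)^(k+1+i)*y^(k-i)))
      (∑ i ∈ Finset.range k, (Nat.choose (2*k) (k+1+i) : ℝ) *
        ((((k:ℝ)+1+i)*y^(k+i)*(1-y)^(k-i) - ((k:ℝ)-i)*y^(k+1+i)*(1-y)^(k-(i+1)))
          + (((k:ℝ)+1+i)*(1-y)^(k+i)*y^(k-i) - ((k:ℝ)-i)*(1-y)^(k+1+i)*y^(k-(i+1))))) y :=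
    HasDerivAt.fun_sum fun i hi => term_deriv k i (Finset.mem_range.mp hi) _ y
  have h3 := h1.add (h2.const_mul (1-α))
  rw [sum_deriv_id k hk y] at h3
  refine h3.congr_deriv ?_
  ring
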